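/- Suppose I_{−k} = ∅ for all k ≥ n. Then for almost every (x_i)_{i∈I} ∈ (ℝ^n)^I the following holds: for every k, all i_0, …, i_k ∈ I, and every tuple (m_1, …, m_k) ∈ E_{i_1 i_0} × ⋯ × E_{i_k i_{k−1}}, the k+1 points y_0 = x_{i_0}, y_ℓ = x_{i_ℓ}+m_1+⋯+m_ℓ (1 ≤ ℓ ≤ k) are affinely independent, and for every nonzero m ∈ ℤ^n the relative (intrinsic) interior of convexHull{y_0, …, y_k} is disjoint from its translate by m; equivalently, π restricts to an injection on this relative interior. In other words, X(F^•) is immersed. -/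

import Mathlib

open scoped BigOperators
open MeasureTheory

noncomputable section

/-- `ℤ^n`, the exponent lattice. -/
abbrev Zn (n : ℕ) : Type := Fin n → ℤ

/-- `ℝ^n`. -/
abbrev Rn (n : ℕ) : Type := Fin n → ℝ

/-- The Laurent polynomial ring `R_n = ℂ[z_1^{±1},…,z_n^{±1}]`, realized as the group
algebra of `ℤ^n` over `ℂ`. -/
abbrev LaurentRing (n : ℕ) : Type := AddMonoidAlgebra ℂ (Zn n)

/-- The embedding `ℤ^n → ℝ^n`. -/
def zToR {n : ℕ} (m : Zn n) : Rn n := fun j => (m j : ℝ)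

/-- A bounded based sequence `F^•` of finite-rank free `R_n`-modules: a finite index set
`I = ⊔_k I_k` (with `I_k = ∅` for `k > 0` and `I_0 ≠ ∅`), recorded via a degree function,
together with the matrix entries `d^k_{ij} ∈ R_n` of the maps `F^k → F^{k+1}`. -/
structure BasedSeq (n : ℕ) where
  I : Type
  fintypeI : Fintype I
  deg : I → ℤ
  deg_nonpos : ∀ i, deg i ≤ 0
  exists_deg_zero : ∃ i, deg i = 0
  d : I → I → LaurentRing n
  d_eq_zero : ∀ i j, deg i ≠ deg j + 1 → d i j = 0

attribute [instance] BasedSeq.fintypeI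

/-- Chains witnessing membership in `E_{ij}`: `EChain F i j m` holds iff there is a chain
`j = i_0, i_1, …, i_k = i` with `deg i_ℓ = deg i_{ℓ-1} + 1` at each step, exponents
`m_ℓ` in the support of the corresponding matrix entry, and `m = m_1 + ⋯ + m_k`. -/
inductive EChain {n : ℕ} (F : BasedSeq n) : F.I → F.I → Zn n → Prop where
  | base {i j : F.I} {m : Zn n} :
      F.deg i = F.deg j + 1 → m ∈ (F.d i j).coeff.support → EChain F i j m
  | step {i j k : F.I} {m m' : Zn n} :
      EChain F j k m → F.deg i = F.deg j + 1 → m' ∈ (F.d i j).coeff.support →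
      EChain F i k (m + m')

/-- The subset `E_{ij} ⊆ ℤ^n`. -/
def Eset {n : ℕ} (F : BasedSeq n) (i j : F.I) : Set (Zn n) := {m | EChain F i j m}

/-- The condition `(m_1, …, m_k) ∈ E_{i_1 i_0} × ⋯ × E_{i_k i_{k-1}}`. -/
def goodTuple {n : ℕ} (F : BasedSeq n) {k : ℕ} (c : Fin (k + 1) → F.I)
    (m : Fin k → Zn n) : Prop :=
  ∀ ℓ : Fin k, m ℓ ∈ Eset F (c ℓ.succ) (c ℓ.castSucc)

/-- The vertex tuple `(x_{i_0}, x_{i_1}+m_1, …, x_{i_k}+m_1+⋯+m_k)` in `ℝ^n`. -/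
def vtx {n : ℕ} (F : BasedSeq n) (x : F.I → Rn n) {k : ℕ}
    (c : Fin (k + 1) → F.I) (m : Fin k → Zn n) : Fin (k + 1) → Rn n :=
  fun a => x (c a) + zToR (∑ ℓ ∈ Finset.univ.filter (fun ℓ : Fin k => (ℓ : ℕ) < (a : ℕ)), m ℓ)

/-- Membership in `X(F^•)_k`: the tuple `y` represents (mod a common `ℤ^n`-translation `t`)
one of the linear `k`-simplices `[x_{i_0}, x_{i_1}+m_1, …, x_{i_k}+m_1+⋯+m_k] mod ℤ^n`. -/
def InX {n : ℕ} (F : BasedSeq n) (x : F.I → Rn n) (k : ℕ)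
    (y : Fin (k + 1) → Rn n) : Prop :=
  ∃ (c : Fin (k + 1) → F.I) (m : Fin k → Zn n) (t : Zn n),
    goodTuple F c m ∧ ∀ a, y a = vtx F x c m a + zToR t

/-- The integer lattice `ℤ^n ⊆ ℝ^n` as an additive subgroup. -/
def intLattice (n : ℕ) : AddSubgroup (Rn n) :=
  AddSubgroup.pi Set.univ fun _ => AddSubgroup.zmultiples (1 : ℝ)

/-- The torus `T^n = ℝ^n/ℤ^n`. -/
abbrev Torus (n : ℕ) := Rn n ⧸ intLattice n

/-- The projection `π : ℝ^n → T^n`. -/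
def toTorus {n : ℕ} : Rn n → Torus n := QuotientAddGroup.mk

/-- The tropical Lagrangian coamoeba `T(F^•) ⊆ T^n`. -/
def TropT {n : ℕ} (F : BasedSeq n) (x : F.I → Rn n) : Set (Torus n) :=
  ⋃ (k : ℕ), ⋃ (c : Fin (k + 1) → F.I), ⋃ (m : Fin k → Zn n), ⋃ (_ : goodTuple F c m),
    toTorus '' convexHull ℝ (Set.range (vtx F x c m))

/-- The subset `S_i ⊆ ℝ^n`. -/
def Sset {n : ℕ} (F : BasedSeq n) (x : F.I → Rn n) (i : F.I) : Set (Rn n) :=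
  ⋃ (k : ℕ), ⋃ (c : Fin (k + 1) → F.I), ⋃ (m : Fin k → Zn n),
    ⋃ (_ : c 0 = i ∧ goodTuple F c m), convexHull ℝ (Set.range (vtx F x c m))

/-- `[x, S] = {t·x + (1−t)·y : y ∈ S, t ∈ [0,1]}`. -/
def joinSet {n : ℕ} (x : Rn n) (S : Set (Rn n)) : Set (Rn n) :=
  {p | ∃ y ∈ S, ∃ t ∈ Set.Icc (0 : ℝ) 1, p = t • x + (1 - t) • y}

/-! ### Auxiliary lemmas for `stmt1` -/

section AuxStmt1

variable {n : ℕ}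

lemma EChain_deg {F : BasedSeq n} {i j : F.I} {m : Zn n} (h : EChain F i j m) :
    F.deg j < F.deg i := by
  induction h with
  | base h _ => omega
  | step _ h _ ih => omega

lemma goodTuple_strictMono {F : BasedSeq n} {k : ℕ} {c : Fin (k + 1) → F.I} {m : Fin k → Zn n}
    (h : goodTuple F c m) : StrictMono fun a => F.deg (c a) :=
  Fin.strictMono_iff_lt_succ.mpr fun i => EChain_deg (h i)

lemma goodTuple_injective {F : BasedSeq n} {k : ℕ} {c : Fin (k + 1) → F.I} {m : Fin k → Zn n}
    (h : goodTuple F c m) : Function.Injective c := fun a b hab =>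
  (goodTuple_strictMono h).injective (congrArg F.deg hab)

lemma goodTuple_growth {F : BasedSeq n} {k : ℕ} {c : Fin (k + 1) → F.I} {m : Fin k → Zn n}
    (h : goodTuple F c m) : ∀ a : Fin (k + 1), ((a : ℕ) : ℤ) + F.deg (c 0) ≤ F.deg (c a) := by
  intro a
  induction a using Fin.induction with
  | zero => simp
  | succ i ih =>
    have h1 := EChain_deg (h i)
    have hcast : ((i.castSucc : ℕ) : ℤ) = ((i : ℕ) : ℤ) := by simp
    have hsucc : ((i.succ : ℕ) : ℤ) = ((i : ℕ) : ℤ) + 1 := by simp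
    omega

lemma zToR_ne_zero {t : Zn n} (ht : t ≠ 0) : zToR t ≠ 0 := by
  intro h
  apply ht
  funext j
  have := congrFun h j
  simp only [zToR, Pi.zero_apply] at this
  exact_mod_cast this

/-- The key generic-position lemma: for a.e. tuple of `k+1` points in `ℝⁿ` (with `k < n`),
the difference vectors together with a fixed nonzero vector `u` are linearly independent. -/
lemma ae_linIndep (n : ℕ) (u : Rn n) (hu : u ≠ 0) :
    ∀ (k : ℕ), k < n →
      ∀ᵐ z : Fin (k + 1) → Rn n ∂volume,
        LinearIndependent ℝ
          (Fin.cons u (fun i : Fin k => z i.succ - z 0) : Fin (k + 1) → Rn n) := by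
  intro k
  induction k with
  | zero =>
    intro _
    refine Filter.Eventually.of_forall fun z => ?_
    rw [linearIndependent_fin_cons]
    refine ⟨linearIndependent_empty_type, ?_⟩
    rw [Set.range_eq_empty, Submodule.span_empty, Submodule.mem_bot]
    exact hu
  | succ k ih =>
    intro hk
    have IH := ih (Nat.lt_of_succ_lt hk)
    classical
    set P : (Fin (k + 2) → Rn n) → Prop := fun z =>
      LinearIndependent ℝ
        (Fin.cons u (fun i : Fin (k + 1) => z i.succ - z 0) : Fin (k + 2) → Rn n) with hP
    have famEq : ∀ (z' : Fin (k + 1) → Rn n) (a : Rn n),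
        (Fin.cons u (fun i : Fin (k + 1) =>
            (Fin.snoc z' a : Fin (k + 2) → Rn n) i.succ -
              (Fin.snoc z' a : Fin (k + 2) → Rn n) 0) : Fin (k + 2) → Rn n)
          = Fin.snoc
              (Fin.cons u (fun i : Fin k => z' i.succ - z' 0) : Fin (k + 1) → Rn n)
              (a - z' 0) := by
      intro z' a
      rw [← Fin.cons_snoc_eq_snoc_cons]
      funext i
      have h00 : (0 : Fin (k + 2)) = Fin.castSucc (0 : Fin (k + 1)) := rfl
      refine Fin.cases ?_ (fun j => ?_) i
      · simp only [Fin.cons_zero]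
      · simp only [Fin.cons_succ]
        refine Fin.lastCases ?_ (fun j' => ?_) j
        · simp only [h00, Fin.succ_last, Fin.snoc_last, Fin.snoc_castSucc]
        · simp only [h00, Fin.succ_castSucc, Fin.snoc_castSucc]
    -- the sections over the last point are a.e. null
    have hS : ∀ᵐ z' : Fin (k + 1) → Rn n ∂volume,
        (volume : Measure (Rn n)) {a : Rn n | ¬ P (Fin.snoc z' a)} = 0 := by
      filter_upwards [IH] with z' hz'
      set v' : Fin (k + 1) → Rn n :=
        (Fin.cons u (fun i : Fin k => z' i.succ - z' 0) : Fin (k + 1) → Rn n) with hv'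
      set W : Submodule ℝ (Rn n) := Submodule.span ℝ (Set.range v') with hW
      have hWne : AffineSubspace.mk' (z' 0) W ≠ (⊤ : AffineSubspace ℝ (Rn n)) := by
        intro htop
        have hdir : W = (⊤ : Submodule ℝ (Rn n)) := by
          have := congrArg AffineSubspace.direction htop
          rwa [AffineSubspace.direction_mk', AffineSubspace.direction_top] at this
        have h1 : Module.finrank ℝ (Rn n) ≤ k + 1 := by
          have h2 := finrank_range_le_card (R := ℝ) v'
          rw [Set.finrank, ← hW, hdir, finrank_top] at h2
          simpa using h2
        rw [Module.finrank_fin_fun] at h1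
        omega
      refine measure_mono_null ?_ (Measure.addHaar_affineSubspace volume _ hWne)
      intro a ha
      simp only [Set.mem_setOf_eq, hP, famEq] at ha
      rw [linearIndependent_fin_snoc, not_and, not_not] at ha
      have hmem : a - z' 0 ∈ W := ha hz'
      rw [SetLike.mem_coe, AffineSubspace.mem_mk']
      simpa [vsub_eq_sub] using hmem
    -- measurability of the bad set
    have hcont : Continuous (fun q : (Fin (k + 1) → Rn n) × Rn n =>
        (Fin.snoc
          (Fin.cons u (fun i : Fin k => q.1 i.succ - q.1 0) : Fin (k + 1) → Rn n)
          (q.2 - q.1 0) : Fin (k + 2) → Rn n)) := by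
      refine continuous_pi fun j => ?_
      refine Fin.lastCases ?_ (fun i => ?_) j
      · simp only [Fin.snoc_last]
        exact continuous_snd.sub ((continuous_apply (0 : Fin (k + 1))).comp continuous_fst)
      · simp only [Fin.snoc_castSucc]
        refine Fin.cases ?_ (fun i' => ?_) i
        · simp only [Fin.cons_zero]; exact continuous_const
        · simp only [Fin.cons_succ]
          exact ((continuous_apply (i'.succ)).comp continuous_fst).sub
            ((continuous_apply (0 : Fin (k + 1))).comp continuous_fst)
    have hT : MeasurableSet {q : (Fin (k + 1) → Rn n) × Rn n | ¬ P (Fin.snoc q.1 q.2)} := by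
      have hEq : {q : (Fin (k + 1) → Rn n) × Rn n | ¬ P (Fin.snoc q.1 q.2)} =
          (fun q : (Fin (k + 1) → Rn n) × Rn n =>
            (Fin.snoc
              (Fin.cons u (fun i : Fin k => q.1 i.succ - q.1 0) : Fin (k + 1) → Rn n)
              (q.2 - q.1 0) : Fin (k + 2) → Rn n)) ⁻¹'
            {f : Fin (k + 2) → Rn n | LinearIndependent ℝ f}ᶜ := by
        ext q
        simp only [Set.mem_setOf_eq, Set.mem_preimage, Set.mem_compl_iff, hP, famEq]
      rw [hEq]
      exact hcont.measurable (isOpen_setOf_linearIndependent.measurableSet.compl)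
    have hTnull : ((volume : Measure (Fin (k + 1) → Rn n)).prod (volume : Measure (Rn n)))
        {q : (Fin (k + 1) → Rn n) × Rn n | ¬ P (Fin.snoc q.1 q.2)} = 0 := by
      rw [Measure.measure_prod_null hT]
      filter_upwards [hS] with z' h
      simpa using h
    have hBad : ((volume : Measure (Rn n)).prod (volume : Measure (Fin (k + 1) → Rn n)))
        {q : (Rn n) × (Fin (k + 1) → Rn n) | ¬ P (Fin.snoc q.2 q.1)} = 0 := by
      have hswap := (Measure.measurePreserving_swap
        (μ := (volume : Measure (Rn n)))
        (ν := (volume : Measure (Fin (k + 1) → Rn n)))).measure_preimage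
        hT.nullMeasurableSet
      have hEq : Prod.swap ⁻¹' {q : (Fin (k + 1) → Rn n) × Rn n | ¬ P (Fin.snoc q.1 q.2)} =
          {q : (Rn n) × (Fin (k + 1) → Rn n) | ¬ P (Fin.snoc q.2 q.1)} := rfl
      rw [hEq] at hswap
      exact hswap.trans hTnull
    have hprod : ∀ᵐ q : (Rn n) × (Fin (k + 1) → Rn n) ∂volume, P (Fin.snoc q.2 q.1) := by
      rw [Measure.volume_eq_prod, ae_iff]
      exact hBad
    have mp := measurePreserving_piFinSuccAbove
      (fun _ : Fin (k + 2) => (volume : Measure (Rn n))) (Fin.last (k + 1))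
    have hmp : MeasurePreserving
        (MeasurableEquiv.piFinSuccAbove (fun _ : Fin (k + 2) => Rn n) (Fin.last (k + 1)))
        volume volume := by
      simpa [Measure.volume_eq_prod, MeasureTheory.volume_pi] using mp
    have h5 := hmp.quasiMeasurePreserving.ae hprod
    refine h5.mono fun z hz => ?_
    have hzeq : (Fin.snoc
        ((MeasurableEquiv.piFinSuccAbove (fun _ : Fin (k + 2) => Rn n) (Fin.last (k + 1))) z).2
        ((MeasurableEquiv.piFinSuccAbove (fun _ : Fin (k + 2) => Rn n) (Fin.last (k + 1))) z).1
        : Fin (k + 2) → Rn n) = z := by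
      funext j
      refine Fin.lastCases ?_ (fun i => ?_) j
      · rw [Fin.snoc_last]; rfl
      · rw [Fin.snoc_castSucc]
        show z ((Fin.last (k + 1)).succAbove i) = z i.castSucc
        rw [Fin.succAbove_last]
    rwa [hzeq] at hz

/-- Transfer of the generic-position lemma to configurations indexed by an arbitrary
finite type, along an injection. -/
lemma ae_linIndep_config {ι : Type} [Fintype ι] (k : ℕ) (hk : k < n)
    (c : Fin (k + 1) → ι) (hc : Function.Injective c) (w : Fin (k + 1) → Rn n)
    (u : Rn n) (hu : u ≠ 0) :
    ∀ᵐ x : ι → Rn n ∂volume,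
      LinearIndependent ℝ
        (Fin.cons u (fun i : Fin k =>
          (x (c i.succ) + w i.succ) - (x (c 0) + w 0)) : Fin (k + 1) → Rn n) := by
  classical
  set P : (Fin (k + 1) → Rn n) → Prop := fun y =>
    LinearIndependent ℝ
      (Fin.cons u (fun i : Fin k => y i.succ - y 0) : Fin (k + 1) → Rn n) with hP
  have h4 : ∀ᵐ y : Fin (k + 1) → Rn n ∂volume, P (y + w) :=
    (measurePreserving_add_right volume w).quasiMeasurePreserving.ae (ae_linIndep n u hu k hk)
  obtain ⟨p, hp⟩ : ∃ p : ι → Prop, p = fun a => a ∈ Set.range c := ⟨_, rfl⟩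
  have hbij : Function.Bijective
      (fun i : Fin (k + 1) => (⟨c i, by rw [hp]; exact Set.mem_range_self i⟩ : Subtype p)) := by
    constructor
    · intro a b hab
      exact hc (congrArg Subtype.val hab)
    · rintro ⟨a, ha⟩
      have ha' : a ∈ Set.range c := by
        have := ha
        rwa [hp] at this
      obtain ⟨i, hi⟩ := ha'
      exact ⟨i, Subtype.ext hi⟩
  set ε : Fin (k + 1) ≃ Subtype p := Equiv.ofBijective _ hbij with hε
  have h3 : ∀ᵐ q : Subtype p → Rn n ∂volume, P (fun i => q (ε i) + w i) := by
    have mp2 := (volume_measurePreserving_piCongrLeft (fun _ : Subtype p => Rn n) ε).symm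
    have := mp2.quasiMeasurePreserving.ae h4
    refine this.mono fun q hq => ?_
    have happ : ∀ i : Fin (k + 1),
        ((MeasurableEquiv.piCongrLeft (fun _ : Subtype p => Rn n) ε).symm q) i = q (ε i) :=
      fun i => rfl
    have : ((MeasurableEquiv.piCongrLeft (fun _ : Subtype p => Rn n) ε).symm q) + w
        = fun i => q (ε i) + w i := by
      funext i
      rw [Pi.add_apply, happ]
    rwa [this] at hq
  have h2 : ∀ᵐ q : (Subtype p → Rn n) × ({a : ι // ¬ p a} → Rn n) ∂volume,
      P (fun i => q.1 (ε i) + w i) := by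
    rw [Measure.volume_eq_prod, ae_iff]
    have hEq : {q : (Subtype p → Rn n) × ({a : ι // ¬ p a} → Rn n) |
        ¬ P (fun i => q.1 (ε i) + w i)} =
        {y : Subtype p → Rn n | ¬ P (fun i => y (ε i) + w i)} ×ˢ Set.univ := by
      ext q
      simp [Set.mem_prod]
    rw [hEq, Measure.prod_prod]
    have h0 : (volume : Measure (Subtype p → Rn n))
        {y : Subtype p → Rn n | ¬ P (fun i => y (ε i) + w i)} = 0 := by
      rw [← ae_iff]; exact h3
    rw [h0, zero_mul]
  have mp1 := volume_preserving_piEquivPiSubtypeProd (fun _ : ι => Rn n) p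
  have h1 := mp1.quasiMeasurePreserving.ae h2
  refine h1.mono fun x hx => ?_
  exact hx

lemma li_conclusions {k : ℕ} (p : Fin (k + 1) → Rn n) (u : Rn n)
    (h : LinearIndependent ℝ
      (Fin.cons u (fun i : Fin k => p i.succ - p 0) : Fin (k + 1) → Rn n)) :
    AffineIndependent ℝ p ∧ u ∉ vectorSpan ℝ (Set.range p) := by
  obtain ⟨hv, hu⟩ := linearIndependent_fin_cons.mp h
  have hbij : Function.Bijective
      (fun i : Fin k => (⟨i.succ, Fin.succ_ne_zero i⟩ : {x : Fin (k + 1) // x ≠ 0})) := by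
    constructor
    · intro a b hab
      exact Fin.succ_injective _ (congrArg Subtype.val hab)
    · rintro ⟨j, hj⟩
      exact ⟨j.pred hj, by simp⟩
  set ε : Fin k ≃ {x : Fin (k + 1) // x ≠ 0} := Equiv.ofBijective _ hbij with hε
  have hcomp : (fun j : {x : Fin (k + 1) // x ≠ 0} => p j -ᵥ p 0) ∘ ε
      = fun i : Fin k => p i.succ - p 0 := by
    funext i
    simp [hε, Equiv.ofBijective, vsub_eq_sub]
  constructor
  · rw [affineIndependent_iff_linearIndependent_vsub ℝ p 0, ← linearIndependent_equiv ε, hcomp]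
    exact hv
  · rw [vectorSpan_range_eq_span_range_vsub_right_ne ℝ p 0]
    have hrange : Set.range (fun j : {x : Fin (k + 1) // x ≠ 0} => p j -ᵥ p 0)
        = Set.range (fun i : Fin k => p i.succ - p 0) := by
      rw [← hcomp, Set.range_comp, Equiv.range_eq_univ, Set.image_univ]
    rw [hrange]
    exact hu

lemma disj_translate {k : ℕ} (p : Fin (k + 1) → Rn n) (u : Rn n)
    (hu : u ∉ vectorSpan ℝ (Set.range p)) :
    Disjoint (intrinsicInterior ℝ (convexHull ℝ (Set.range p)))
      ((fun y => y + u) '' intrinsicInterior ℝ (convexHull ℝ (Set.range p))) := by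
  rw [Set.disjoint_left]
  intro y hy hyt
  obtain ⟨y', hy', hEq⟩ := hyt
  have hsub : intrinsicInterior ℝ (convexHull ℝ (Set.range p))
      ⊆ (affineSpan ℝ (Set.range p) : Set (Rn n)) :=
    Set.Subset.trans intrinsicInterior_subset (convexHull_subset_affineSpan _)
  have h1 : y ∈ affineSpan ℝ (Set.range p) := hsub hy
  have h2 : y' ∈ affineSpan ℝ (Set.range p) := hsub hy'
  have h3 : y -ᵥ y' ∈ (affineSpan ℝ (Set.range p)).direction :=
    AffineSubspace.vsub_mem_direction h1 h2
  rw [direction_affineSpan] at h3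
  apply hu
  have h4 : y -ᵥ y' = u := by
    rw [← hEq, vsub_eq_sub]
    exact add_sub_cancel_left y' u
  rwa [h4] at h3

end AuxStmt1

/-- if `I_{-k} = ∅` for all `k ≥ n`, then for almost every configuration
`(x_i) ∈ (ℝ^n)^I` every simplex of `X(F^•)` has affinely independent vertices and its
relative interior is disjoint from all of its nonzero `ℤ^n`-translates; i.e. `X(F^•)`
is immersed. -/
theorem stmt1 (n : ℕ) (hn : 1 ≤ n) (F : BasedSeq n)
    (hshort : ∀ i : F.I, -(n : ℤ) < F.deg i) :
    ∀ᵐ x : F.I → Rn n ∂volume,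
      ∀ (k : ℕ) (c : Fin (k + 1) → F.I) (m : Fin k → Zn n), goodTuple F c m →
        AffineIndependent ℝ (vtx F x c m) ∧
        ∀ t : Zn n, t ≠ 0 →
          Disjoint (intrinsicInterior ℝ (convexHull ℝ (Set.range (vtx F x c m))))
            ((fun y => y + zToR t) ''
              intrinsicInterior ℝ (convexHull ℝ (Set.range (vtx F x c m)))) := by
  have key : ∀ (k : ℕ) (c : Fin (k + 1) → F.I) (m : Fin k → Zn n) (t : Zn n),
      ∀ᵐ x : F.I → Rn n ∂volume, goodTuple F c m → t ≠ 0 →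
        LinearIndependent ℝ
          (Fin.cons (zToR t)
            (fun i : Fin k => vtx F x c m i.succ - vtx F x c m 0) : Fin (k + 1) → Rn n) := by
    intro k c m t
    by_cases hg : goodTuple F c m
    · by_cases ht : t = 0
      · exact Filter.Eventually.of_forall fun x _ h2 => absurd ht h2
      · have hc := goodTuple_injective hg
        have hk : k < n := by
          have h1 := goodTuple_growth hg (Fin.last k)
          have h4 : ((Fin.last k : Fin (k + 1)) : ℕ) = k := Fin.val_last k
          rw [h4] at h1
          have h2 := F.deg_nonpos (c (Fin.last k))
          have h3 := hshort (c 0)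
          omega
        have hgen := ae_linIndep_config k hk c hc
          (fun a => zToR (∑ ℓ ∈ Finset.univ.filter (fun ℓ : Fin k => (ℓ : ℕ) < (a : ℕ)), m ℓ))
          (zToR t) (zToR_ne_zero ht)
        exact hgen.mono fun x hx _ _ => hx
    · exact Filter.Eventually.of_forall fun x h1 => absurd h1 hg
  have all : ∀ᵐ x : F.I → Rn n ∂volume,
      ∀ (k : ℕ) (c : Fin (k + 1) → F.I) (m : Fin k → Zn n) (t : Zn n),
        goodTuple F c m → t ≠ 0 →
          LinearIndependent ℝ
            (Fin.cons (zToR t)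
              (fun i : Fin k => vtx F x c m i.succ - vtx F x c m 0) : Fin (k + 1) → Rn n) := by
    rw [ae_all_iff]
    intro k
    rw [ae_all_iff]
    intro c
    rw [ae_all_iff]
    intro m
    rw [ae_all_iff]
    intro t
    exact key k c m t
  filter_upwards [all] with x hx
  intro k c m hgood
  have ht0 : (fun _ => (1 : ℤ) : Zn n) ≠ 0 := by
    intro h
    have := congrFun h ⟨0, hn⟩
    simp at this
  constructor
  · exact (li_conclusions _ _ (hx k c m _ hgood ht0)).1
  · intro t ht
    exact disj_translate _ _ (li_conclusions _ _ (hx k c m t hgood ht)).2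


end
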